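/- Let P be an H-group and N a normal sub-H-group of P, i.e., for every g ∈ P and n ∈ N, the element g·n·g⁻¹ is joined by a path in P to a point of N. Then the set P/N of left cosets of N, with multiplication (g₁N)·(g₂N) = (g₁·g₂)N and inverse (gN)⁻¹ = η(g)N, is a well-defined group whose identity is the coset p₀N. -/
import Mathlib


open ContinuousMap

universe u v

/-- An H-group: a pointed space with continuous multiplication, homotopy inverse and the
constant map as homotopy identity, satisfying the H-group axioms up to pointed homotopy. -/
structure HGroup (P : Type u) [TopologicalSpace P] where
  pt : P
  mul : C(P × P, P)
  inv : C(P, P)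
  mul_pt : mul (pt, pt) = pt
  inv_pt : inv pt = pt
  left_id : HomotopicRel ⟨fun g => mul (pt, g), by fun_prop⟩ (ContinuousMap.id P) {pt}
  right_id : HomotopicRel ⟨fun g => mul (g, pt), by fun_prop⟩ (ContinuousMap.id P) {pt}
  left_inv : HomotopicRel ⟨fun g => mul (inv g, g), by fun_prop⟩ (const P pt) {pt}
  right_inv : HomotopicRel ⟨fun g => mul (g, inv g), by fun_prop⟩ (const P pt) {pt}
  assoc : HomotopicRel ⟨fun p : P × P × P => mul (mul (p.1, p.2.1), p.2.2), by fun_prop⟩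
      ⟨fun p : P × P × P => mul (p.1, mul (p.2.1, p.2.2)), by fun_prop⟩ {(pt, pt, pt)}

/-- `Jtn S g` : `g` homotopically belongs to `S`, i.e. there is a path in the ambient
space from `g` to a point of `S`. -/
def Jtn {P : Type u} [TopologicalSpace P] (S : Set P) (g : P) : Prop := ∃ s ∈ S, Joined g s

/-- The class of `g` in `π₀`. -/
def pc {P : Type u} [TopologicalSpace P] (g : P) : ZerothHomotopy P :=
  Quotient.mk (pathSetoid P) g

namespace HGroup
variable {P : Type u} [TopologicalSpace P]

/-- The left coset `g·S = {g' | η(g)·g' ∈̃ S}`. -/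
def lcoset (H : HGroup P) (g : P) (S : Set P) : Set P :=
  {g' | Jtn S (H.mul (H.inv g, g'))}

/-- The right coset `S·g = {g' | g'·η(g) ∈̃ S}`. -/
def rcoset (H : HGroup P) (S : Set P) (g : P) : Set P :=
  {g' | Jtn S (H.mul (g', H.inv g))}

/-- The pointwise product of two subsets. -/
def mulSet (H : HGroup P) (A B : Set P) : Set P := {p | ∃ a ∈ A, ∃ b ∈ B, p = H.mul (a, b)}

end HGroup

/-- A subset is saturated if it is a union of path components of the ambient space. -/
def Saturated {P : Type u} [TopologicalSpace P] (A : Set P) : Prop :=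
  ∀ x ∈ A, ∀ y, Joined x y → y ∈ A

/-- A sub-H-group: a pointed subspace which is itself an H-group such that the
inclusion is an H-homomorphism (via pointed homotopies). -/
structure SubHGroup {P : Type u} [TopologicalSpace P] (H : HGroup P) where
  carrier : Set P
  struct : HGroup carrier
  pt_val : (struct.pt : P) = H.pt
  incl_mul : HomotopicRel
    ⟨fun p : carrier × carrier => (struct.mul p : P), by fun_prop⟩
    ⟨fun p : carrier × carrier => H.mul (p.1, p.2), by fun_prop⟩
    {(struct.pt, struct.pt)}
  incl_inv : HomotopicRel
    ⟨fun x : carrier => (struct.inv x : P), by fun_prop⟩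
    ⟨fun x : carrier => H.inv x, by fun_prop⟩
    {struct.pt}

/-- A sub-H-group is normal if `g·n·g⁻¹` homotopically belongs to it for all `g`, `n`. -/
def SubHGroup.Normal {P : Type u} [TopologicalSpace P] {H : HGroup P}
    (N : SubHGroup H) : Prop :=
  ∀ g : P, ∀ n ∈ N.carrier, Jtn N.carrier (H.mul (H.mul (g, n), H.inv g))

/-- The set of left cosets of `S` in `P`. -/
def Cosets {P : Type u} [TopologicalSpace P] (H : HGroup P) (S : Set P) :=
  {T : Set P // ∃ g : P, T = H.lcoset g S}

/-- The left coset of `S` represented by `g`, as an element of `Cosets H S`. -/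
def cst {P : Type u} [TopologicalSpace P] (H : HGroup P) (S : Set P) (g : P) : Cosets H S :=
  ⟨H.lcoset g S, g, rfl⟩

/-- The coset equivalence relation: `g₁ ∼ g₂` iff `g₁·η(g₂) ∈̃ S`. -/
def cosetRel {P : Type u} [TopologicalSpace P] (H : HGroup P) (S : Set P)
    (g₁ g₂ : P) : Prop :=
  Jtn S (H.mul (g₁, H.inv g₂))

section Pi0Aux

variable {P : Type u} [TopologicalSpace P]

/-- A homotopy between maps gives pointwise `Joined`. -/
lemma homotopicRel_joined {X : Type v} [TopologicalSpace X] {f g : C(X, P)} {S : Set X}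
    (h : HomotopicRel f g S) (x : X) : Joined (f x) (g x) := by
  obtain ⟨F⟩ := h
  exact ⟨F.toHomotopy.evalAt x⟩

lemma pc_eq_iff_joined {a b : P} : pc a = pc b ↔ Joined a b :=
  ⟨fun h => Quotient.exact h, fun h => Quotient.sound h⟩

/-- The induced group structure on `π₀` of an H-group. -/
def HGroup.pi0Group (H : HGroup P) : Group (ZerothHomotopy P) where
  mul := Quotient.map₂ (fun a b => H.mul (a, b)) (fun a a' ha b b' hb => by
    obtain ⟨p⟩ := ha
    obtain ⟨q⟩ := hb
    exact ⟨(p.prod q).map H.mul.continuous⟩)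
  one := pc H.pt
  inv := Quotient.map (fun a => H.inv a) (fun a a' ha => by
    obtain ⟨p⟩ := ha
    exact ⟨p.map H.inv.continuous⟩)
  mul_assoc a b c := by
    induction a using Quotient.inductionOn with | h a =>
    induction b using Quotient.inductionOn with | h b =>
    induction c using Quotient.inductionOn with | h c =>
    exact Quotient.sound (homotopicRel_joined H.assoc (a, b, c))
  one_mul a := by
    induction a using Quotient.inductionOn with | h a =>
    exact Quotient.sound (homotopicRel_joined H.left_id a)
  mul_one a := by
    induction a using Quotient.inductionOn with | h a =>
    exact Quotient.sound (homotopicRel_joined H.right_id a)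
  inv_mul_cancel a := by
    induction a using Quotient.inductionOn with | h a =>
    exact Quotient.sound (homotopicRel_joined H.left_inv a)

end Pi0Aux

/-- For a normal sub-H-group `N` of `P`, the set `P/N` of left cosets of `N`, with
multiplication `(g₁N)(g₂N) = (g₁·g₂)N` and inverse `(gN)⁻¹ = η(g)N`, is a well-defined
group with identity the coset `p₀N`. -/
theorem stmt_9 {P : Type u} [TopologicalSpace P] (H : HGroup P) (N : SubHGroup H)
    (hN : N.Normal) :
    ∃ m : Cosets H N.carrier → Cosets H N.carrier → Cosets H N.carrier,
    ∃ i : Cosets H N.carrier → Cosets H N.carrier,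
      (∀ g₁ g₂ : P,
        m (cst H N.carrier g₁) (cst H N.carrier g₂) = cst H N.carrier (H.mul (g₁, g₂))) ∧
      (∀ g : P, i (cst H N.carrier g) = cst H N.carrier (H.inv g)) ∧
      (∀ a b c, m (m a b) c = m a (m b c)) ∧
      (∀ a, m (cst H N.carrier H.pt) a = a) ∧
      (∀ a, m a (cst H N.carrier H.pt) = a) ∧
      (∀ a, m (i a) a = cst H N.carrier H.pt) ∧
      (∀ a, m a (i a) = cst H N.carrier H.pt) := by
  letI := H.pi0Group
  -- basic computation rules for `pc`
  have pc_mul : ∀ a b : P, pc (H.mul (a, b)) = pc a * pc b := fun a b => rfl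
  have pc_inv : ∀ a : P, pc (H.inv a) = (pc a)⁻¹ := fun a => rfl
  have pc_one : (1 : ZerothHomotopy P) = pc H.pt := rfl
  -- the image of `N` in `π₀` is a normal subgroup
  have hptN : H.pt ∈ N.carrier := N.pt_val ▸ N.struct.pt.2
  let K : Subgroup (ZerothHomotopy P) :=
    { carrier := pc '' N.carrier
      one_mem' := ⟨H.pt, hptN, rfl⟩
      mul_mem' := by
        rintro _ _ ⟨x, hx, rfl⟩ ⟨y, hy, rfl⟩
        refine ⟨(N.struct.mul (⟨x, hx⟩, ⟨y, hy⟩) : P), (N.struct.mul (⟨x, hx⟩, ⟨y, hy⟩)).2, ?_⟩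
        rw [← pc_mul]
        exact Quotient.sound (homotopicRel_joined N.incl_mul (⟨x, hx⟩, ⟨y, hy⟩))
      inv_mem' := by
        rintro _ ⟨x, hx, rfl⟩
        refine ⟨(N.struct.inv ⟨x, hx⟩ : P), (N.struct.inv ⟨x, hx⟩).2, ?_⟩
        rw [← pc_inv]
        exact Quotient.sound (homotopicRel_joined N.incl_inv ⟨x, hx⟩) }
  have hKmem : ∀ x : ZerothHomotopy P, x ∈ K ↔ x ∈ pc '' N.carrier := fun x => Iff.rfl
  have hKn : K.Normal := by
    constructor
    rintro _ hk g
    rw [hKmem] at hk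
    obtain ⟨n, hn, rfl⟩ := hk
    induction g using Quotient.inductionOn with | h g =>
    obtain ⟨n', hn', hj⟩ := hN g n hn
    exact ⟨n', hn', (Quotient.sound hj).symm⟩
  -- membership translation
  have jtn_iff : ∀ x : P, Jtn N.carrier x ↔ pc x ∈ K := by
    intro x
    rw [hKmem]
    constructor
    · rintro ⟨s, hs, hj⟩
      exact ⟨s, hs, (Quotient.sound hj).symm⟩
    · rintro ⟨s, hs, he⟩
      exact ⟨s, hs, Quotient.exact he.symm⟩
  have mem_lcoset : ∀ g g' : P, g' ∈ H.lcoset g N.carrier ↔ (pc g)⁻¹ * pc g' ∈ K := by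
    intro g g'
    rw [← pc_inv, ← pc_mul]
    exact jtn_iff _
  -- the key criterion for equality of cosets
  have cst_eq : ∀ g₁ g₂ : P,
      cst H N.carrier g₁ = cst H N.carrier g₂ ↔ (pc g₂)⁻¹ * pc g₁ ∈ K := by
    intro g₁ g₂
    constructor
    · intro h
      have h1 : g₁ ∈ H.lcoset g₁ N.carrier := by
        rw [mem_lcoset, inv_mul_cancel]; exact K.one_mem
      have hset : H.lcoset g₁ N.carrier = H.lcoset g₂ N.carrier := congrArg Subtype.val h
      rw [hset, mem_lcoset] at h1
      exact h1
    · intro hk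
      apply Subtype.ext
      show H.lcoset g₁ N.carrier = H.lcoset g₂ N.carrier
      ext g'
      rw [mem_lcoset, mem_lcoset]
      constructor
      · intro h
        have e : (pc g₂)⁻¹ * pc g₁ * ((pc g₁)⁻¹ * pc g') = (pc g₂)⁻¹ * pc g' := by group
        simpa [e] using K.mul_mem hk h
      · intro h
        have e : ((pc g₂)⁻¹ * pc g₁)⁻¹ * ((pc g₂)⁻¹ * pc g') = (pc g₁)⁻¹ * pc g' := by group
        have h' := K.mul_mem (K.inv_mem hk) h
        rwa [e] at h'
  -- well-definedness of multiplication and inversion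
  have mul_congr : ∀ g₁ g₁' g₂ g₂' : P, cst H N.carrier g₁ = cst H N.carrier g₁' →
      cst H N.carrier g₂ = cst H N.carrier g₂' →
      cst H N.carrier (H.mul (g₁, g₂)) = cst H N.carrier (H.mul (g₁', g₂')) := by
    intro g₁ g₁' g₂ g₂' h1 h2
    rw [cst_eq] at h1 h2 ⊢
    rw [pc_mul, pc_mul]
    have hconj : (pc g₂')⁻¹ * ((pc g₁')⁻¹ * pc g₁) * ((pc g₂')⁻¹)⁻¹ ∈ K :=
      hKn.conj_mem _ h1 _
    have e : (pc g₁' * pc g₂')⁻¹ * (pc g₁ * pc g₂)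
        = ((pc g₂')⁻¹ * ((pc g₁')⁻¹ * pc g₁) * ((pc g₂')⁻¹)⁻¹) * ((pc g₂')⁻¹ * pc g₂) := by
      group
    rw [e]
    exact K.mul_mem hconj h2
  have inv_congr : ∀ g g' : P, cst H N.carrier g = cst H N.carrier g' →
      cst H N.carrier (H.inv g) = cst H N.carrier (H.inv g') := by
    intro g g' h
    rw [cst_eq] at h ⊢
    rw [pc_inv, pc_inv]
    have hconj : pc g' * ((pc g')⁻¹ * pc g)⁻¹ * (pc g')⁻¹ ∈ K :=
      hKn.conj_mem _ (K.inv_mem h) _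
    have e : ((pc g')⁻¹)⁻¹ * (pc g)⁻¹ = pc g' * ((pc g')⁻¹ * pc g)⁻¹ * (pc g')⁻¹ := by group
    rw [e]
    exact hconj
  -- representatives
  let rep : Cosets H N.carrier → P := fun a => a.2.choose
  have hrep : ∀ a : Cosets H N.carrier, cst H N.carrier (rep a) = a := by
    intro a
    exact Subtype.ext a.2.choose_spec.symm
  refine ⟨fun a b => cst H N.carrier (H.mul (rep a, rep b)),
    fun a => cst H N.carrier (H.inv (rep a)), ?_, ?_, ?_, ?_, ?_, ?_, ?_⟩
  · intro g₁ g₂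
    exact mul_congr _ _ _ _ (hrep (cst H N.carrier g₁)) (hrep (cst H N.carrier g₂))
  · intro g
    exact inv_congr _ _ (hrep (cst H N.carrier g))
  · intro a b c
    have h1 : cst H N.carrier (H.mul (rep (cst H N.carrier (H.mul (rep a, rep b))), rep c))
        = cst H N.carrier (H.mul (H.mul (rep a, rep b), rep c)) :=
      mul_congr _ _ _ _ (hrep _) rfl
    have h2 : cst H N.carrier (H.mul (rep a, rep (cst H N.carrier (H.mul (rep b, rep c)))))
        = cst H N.carrier (H.mul (rep a, H.mul (rep b, rep c))) :=
      mul_congr _ _ _ _ rfl (hrep _)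
    have h3 : cst H N.carrier (H.mul (H.mul (rep a, rep b), rep c))
        = cst H N.carrier (H.mul (rep a, H.mul (rep b, rep c))) := by
      rw [cst_eq, pc_mul, pc_mul, pc_mul, pc_mul]
      have e : (pc (rep a) * (pc (rep b) * pc (rep c)))⁻¹
          * (pc (rep a) * pc (rep b) * pc (rep c)) = 1 := by group
      rw [e]
      exact K.one_mem
    exact h1.trans (h3.trans h2.symm)
  · intro a
    have h1 : cst H N.carrier (H.mul (rep (cst H N.carrier H.pt), rep a))
        = cst H N.carrier (H.mul (H.pt, rep a)) := mul_congr _ _ _ _ (hrep _) rfl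
    have h2 : cst H N.carrier (H.mul (H.pt, rep a)) = cst H N.carrier (rep a) := by
      rw [cst_eq, pc_mul, ← pc_one]
      have e : (pc (rep a))⁻¹ * (1 * pc (rep a)) = 1 := by group
      rw [e]
      exact K.one_mem
    exact h1.trans (h2.trans (hrep a))
  · intro a
    have h1 : cst H N.carrier (H.mul (rep a, rep (cst H N.carrier H.pt)))
        = cst H N.carrier (H.mul (rep a, H.pt)) := mul_congr _ _ _ _ rfl (hrep _)
    have h2 : cst H N.carrier (H.mul (rep a, H.pt)) = cst H N.carrier (rep a) := by
      rw [cst_eq, pc_mul, ← pc_one]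
      have e : (pc (rep a))⁻¹ * (pc (rep a) * 1) = 1 := by group
      rw [e]
      exact K.one_mem
    exact h1.trans (h2.trans (hrep a))
  · intro a
    have h1 : cst H N.carrier
          (H.mul (rep (cst H N.carrier (H.inv (rep a))), rep a))
        = cst H N.carrier (H.mul (H.inv (rep a), rep a)) := mul_congr _ _ _ _ (hrep _) rfl
    have h2 : cst H N.carrier (H.mul (H.inv (rep a), rep a)) = cst H N.carrier H.pt := by
      rw [cst_eq, pc_mul, pc_inv, ← pc_one]
      have e : 1⁻¹ * ((pc (rep a))⁻¹ * pc (rep a)) = 1 := by group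
      rw [e]
      exact K.one_mem
    exact h1.trans h2
  · intro a
    have h1 : cst H N.carrier
          (H.mul (rep a, rep (cst H N.carrier (H.inv (rep a)))))
        = cst H N.carrier (H.mul (rep a, H.inv (rep a))) := mul_congr _ _ _ _ rfl (hrep _)
    have h2 : cst H N.carrier (H.mul (rep a, H.inv (rep a))) = cst H N.carrier H.pt := by
      rw [cst_eq, pc_mul, pc_inv, ← pc_one]
      have e : 1⁻¹ * (pc (rep a) * (pc (rep a))⁻¹) = 1 := by group
      rw [e]
      exact K.one_mem
    exact h1.trans h2
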